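/- Every standard equation set can be transformed into a prioritized standard equation set with the same provable solutions: if an expression E provably satisfies a standard equation set S, then E provably satisfies the prioritized standard equation set S' obtained from S by deleting every δ-prefixed summand δ.X_i from equations that also contain a τ-prefixed summand; moreover if S is guarded so is S'. -/

import Mathlib

namespace PrioCalc

inductive Act where
  | tau : Act
  | vis : ℕ → Act
  | delta : Act
deriving DecidableEq

inductive Expr where
  | nil : Expr
  | var : ℕ → Expr
  | pre : Act → Expr → Expr
  | sum : Expr → Expr → Expr
  | recur : ℕ → Expr → Expr
  | pri : Expr → Expr
deriving DecidableEq

/-- Syntactic substitution of `F` for the free occurrences of variable `x`. -/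
def subst : Expr → ℕ → Expr → Expr
  | .nil, _, _ => .nil
  | .var m, x, F => if m = x then F else .var m
  | .pre γ E, x, F => .pre γ (subst E x F)
  | .sum E G, x, F => .sum (subst E x F) (subst G x F)
  | .recur y E, x, F => if y = x then .recur y E else .recur y (subst E x F)
  | .pri E, x, F => .pri (subst E x F)

/-- `free E x` : `x` occurs free in `E`. -/
def free : Expr → ℕ → Prop
  | .nil, _ => False
  | .var m, x => m = x
  | .pre _ E, x => free E x
  | .sum E G, x => free E x ∨ free G x
  | .recur y E, x => x ≠ y ∧ free E x
  | .pri E, x => free E x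

def Closed (E : Expr) : Prop := ∀ x, ¬ free E x

/-- Standard (non-δ) transitions; these never depend on δ-transitions. -/
inductive StepStd : Expr → Act → Expr → Prop where
  | pre {α : Act} (h : α ≠ Act.delta) (E : Expr) : StepStd (.pre α E) α E
  | sumL {P α P'} (Q : Expr) : StepStd P α P' → StepStd (.sum P Q) α P'
  | sumR {Q α Q'} (P : Expr) : StepStd Q α Q' → StepStd (.sum P Q) α Q'
  | unf {x E γ P'} : StepStd (subst E x (.recur x E)) γ P' → StepStd (.recur x E) γ P'
  | pri {P α P'} : StepStd P α P' → StepStd (.pri P) α P'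

def CanTau (P : Expr) : Prop := ∃ P', StepStd P Act.tau P'

/-- δ-transitions (stratified: the negative premise refers to standard transitions). -/
inductive StepDel : Expr → Expr → Prop where
  | pre (E : Expr) : StepDel (.pre Act.delta E) E
  | sumL {P P'} (Q : Expr) : StepDel P P' → ¬ CanTau Q → StepDel (.sum P Q) P'
  | sumR {Q Q'} (P : Expr) : StepDel Q Q' → ¬ CanTau P → StepDel (.sum P Q) Q'
  | unf {x E P'} : StepDel (subst E x (.recur x E)) P' → StepDel (.recur x E) P'

/-- The full (prioritized) transition relation. -/
def Step (P : Expr) (γ : Act) (Q : Expr) : Prop :=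
  if γ = Act.delta then StepDel P Q else StepStd P γ Q

def TauStar : Expr → Expr → Prop :=
  Relation.ReflTransGen (fun P Q => Step P Act.tau Q)

/-- Weak transition `==γ==>` : τ* γ τ* (at least one γ step). -/
def Weak (P : Expr) (γ : Act) (Q : Expr) : Prop :=
  ∃ P₁ P₂, TauStar P P₁ ∧ Step P₁ γ P₂ ∧ TauStar P₂ Q

/-- Weak transition `==γ̂==>`. -/
def WeakHat (P : Expr) (γ : Act) (Q : Expr) : Prop :=
  if γ = Act.tau then TauStar P Q else Weak P γ Q

def IsWeakBisim (β : Expr → Expr → Prop) : Prop :=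
  ∀ P Q, β P Q →
    (∀ γ P', Step P γ P' → ∃ Q', WeakHat Q γ Q' ∧ β P' Q') ∧
    (∀ γ Q', Step Q γ Q' → ∃ P', WeakHat P γ P' ∧ β P' Q')

/-- Weak bisimilarity `≈`. -/
def WBisim (P Q : Expr) : Prop := ∃ β, IsWeakBisim β ∧ β P Q

/-- Observational congruence `≃`. -/
def ObsCong (P Q : Expr) : Prop :=
  (∀ γ P', Step P γ P' → ∃ Q', Weak Q γ Q' ∧ WBisim P' Q') ∧
  (∀ γ Q', Step Q γ Q' → ∃ P', Weak P γ P' ∧ WBisim P' Q')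

/-- Terms of the basic calculus (no occurrence of the auxiliary `pri` operator). -/
def PriFree : Expr → Prop
  | .nil => True
  | .var _ => True
  | .pre _ E => PriFree E
  | .sum E F => PriFree E ∧ PriFree F
  | .recur _ E => PriFree E
  | .pri _ => False

/-- Every free occurrence of `x` in `E` is (strongly) guarded. -/
def GVar : Expr → ℕ → Prop
  | .nil, _ => True
  | .var m, x => m ≠ x
  | .pre γ E, x => γ = Act.tau → GVar E x
  | .sum E F, x => GVar E x ∧ GVar F x
  | .recur y E, x => y ≠ x → GVar E x
  | .pri E, x => GVar E x

/-- `E` is (strongly) guarded: every recursion subterm is guarded. -/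
def Guarded : Expr → Prop
  | .nil => True
  | .var _ => True
  | .pre _ E => Guarded E
  | .sum E F => Guarded E ∧ Guarded F
  | .recur y E => GVar E y ∧ Guarded E
  | .pri E => Guarded E

/-- Some free occurrence of `x` in `E` is unguarded (not under a non-τ prefix). -/
def UnguardedVar : Expr → ℕ → Prop
  | .nil, _ => False
  | .var m, x => m = x
  | .pre γ E, x => γ = Act.tau ∧ UnguardedVar E x
  | .sum E F, x => UnguardedVar E x ∨ UnguardedVar F x
  | .recur y E, x => y ≠ x ∧ UnguardedVar E x
  | .pri E, x => UnguardedVar E x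

/-- `x` is serial in `E` : every subexpression containing `x` free, apart from `x`
itself, is a prefix, a sum or a recursion. -/
def SerialVar : Expr → ℕ → Prop
  | .nil, _ => True
  | .var _, _ => True
  | .pre _ E, x => SerialVar E x
  | .sum E F, x => SerialVar E x ∧ SerialVar F x
  | .recur y E, x => y = x ∨ SerialVar E x
  | .pri E, x => ¬ free E x

/-- Simultaneous substitution of closed terms for free variables. -/
def msubst : Expr → (ℕ → Expr) → Expr
  | .nil, _ => .nil
  | .var m, σ => σ m
  | .pre γ E, σ => .pre γ (msubst E σ)
  | .sum E F, σ => .sum (msubst E σ) (msubst F σ)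
  | .recur y E, σ => .recur y (msubst E (Function.update σ y (.var y)))
  | .pri E, σ => .pri (msubst E σ)

/-- Observational congruence on open terms (via closed substitutions). -/
def ObsCongO (E F : Expr) : Prop :=
  ∀ σ : ℕ → Expr, (∀ n, Closed (σ n)) → ObsCong (msubst E σ) (msubst F σ)

/-- The axiom system 𝒜. -/
inductive Prov : Expr → Expr → Prop where
  | refl (E) : Prov E E
  | symm {E F} : Prov E F → Prov F E
  | trans {E F G} : Prov E F → Prov F G → Prov E G
  | congPre (γ) {E F} : Prov E F → Prov (.pre γ E) (.pre γ F)
  | congSum {E E' F F'} : Prov E E' → Prov F F' → Prov (.sum E F) (.sum E' F')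
  | congRec (x) {E F} : Prov E F → Prov (.recur x E) (.recur x F)
  | congPri {E F} : Prov E F → Prov (.pri E) (.pri F)
  | a1 (E F) : Prov (.sum E F) (.sum F E)
  | a2 (E F G) : Prov (.sum (.sum E F) G) (.sum E (.sum F G))
  | a3 (E) : Prov (.sum E E) E
  | a4 (E) : Prov (.sum E .nil) E
  | tau1 (γ E) : Prov (.pre γ (.pre Act.tau E)) (.pre γ E)
  | tau2 (E) : Prov (.sum E (.pre Act.tau E)) (.pre Act.tau E)
  | tau3 (γ E F) :
      Prov (.sum (.pre γ (.sum E (.pre Act.tau F))) (.pre γ F))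
           (.pre γ (.sum E (.pre Act.tau F)))
  | pri1 : Prov (.pri .nil) .nil
  | pri2 {α} (h : α ≠ Act.delta) (E) : Prov (.pri (.pre α E)) (.pre α E)
  | pri3 (E) : Prov (.pri (.pre Act.delta E)) .nil
  | pri4 (E F) : Prov (.pri (.sum E F)) (.sum (.pri E) (.pri F))
  | pri5 (E) : Prov (.pri (.pri E)) (.pri E)
  | pri6 (E F) : Prov (.sum (.pre Act.tau E) F) (.sum (.pre Act.tau E) (.pri F))
  | rec1 (x E) : Prov (.recur x E) (subst E x (.recur x E))
  | rec2 {x E F} (hs : SerialVar E x) (hg : GVar E x) :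
      Prov F (subst E x F) → Prov F (.recur x E)
  | ung1 (x E) : Prov (.recur x (.sum (.var x) E)) (.recur x E)
  | ung2 (x E) :
      Prov (.recur x (.sum (.pre Act.tau (.var x)) E)) (.recur x (.pre Act.tau (.pri E)))
  | ung3 (x E F) :
      Prov (.recur x (.sum (.pre Act.tau (.sum (.var x) E)) F))
           (.recur x (.sum (.sum (.pre Act.tau (.var x)) E) F))
  | ung4 (x E F) :
      Prov (.recur x (.sum (.pre Act.tau (.sum (.pri (.var x)) E)) F))
           (.recur x (.sum (.sum (.pre Act.tau (.var x)) E) F))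

/-- Standard equation sets: formal variables are `X i = var i` for `i < n`,
free variables are variables `≥ n`. -/
structure StdEqSet (n : ℕ) where
  pres : Fin n → List (Act × Fin n)
  frees : Fin n → List ℕ
  frees_ge : ∀ i, ∀ w ∈ frees i, n ≤ w

/-- The body `H_i{Ẽ/X̃}` of the `i`-th equation with expressions `Es` for the
formal variables. -/
def instBody {n : ℕ} (S : StdEqSet n) (Es : Fin n → Expr) (i : Fin n) : Expr :=
  (S.pres i).foldr (fun p acc => Expr.sum (Expr.pre p.1 (Es p.2)) acc)
    ((S.frees i).foldr (fun w acc => Expr.sum (Expr.var w) acc) Expr.nil)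

/-- `E` provably satisfies `S` (distinguished variable `X 0`). -/
def ProvSat {n : ℕ} (hn : 0 < n) (E : Expr) (S : StdEqSet n) : Prop :=
  ∃ Es : Fin n → Expr, Es ⟨0, hn⟩ = E ∧
    (∀ i x, free (Es i) x → n ≤ x) ∧
    (∀ i, Prov (Es i) (instBody S Es i))

/-- No equation contains both a τ-prefixed and a δ-prefixed summand. -/
def Prioritized {n : ℕ} (S : StdEqSet n) : Prop :=
  ∀ i, (∃ j, (Act.tau, j) ∈ S.pres i) → ∀ j, (Act.delta, j) ∉ S.pres i

/-- No cycle of unguarded (i.e. τ-prefixed) dependencies. -/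
def EqGuarded {n : ℕ} (S : StdEqSet n) : Prop :=
  ∀ i : Fin n, ¬ Relation.TransGen (fun i j : Fin n => (Act.tau, j) ∈ S.pres i) i i

/-- Delete every δ-prefixed summand from equations that also contain a
τ-prefixed summand. -/
def prioritize {n : ℕ} (S : StdEqSet n) : StdEqSet n where
  pres i := if (S.pres i).any (fun p => decide (p.1 = Act.tau))
            then (S.pres i).filter (fun p => decide (p.1 ≠ Act.delta))
            else S.pres i
  frees := S.frees
  frees_ge := S.frees_ge

/-- A top-level τ-prefixed summand. -/
inductive HasTau : Expr → Prop where
  | pre (E) : HasTau (.pre Act.tau E)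
  | sumL {P} (Q) : HasTau P → HasTau (.sum P Q)
  | sumR {Q} (P) : HasTau Q → HasTau (.sum P Q)

/-- τ.E + δ.F = τ.E (derived from Pri6, Pri3, A4). -/
lemma prov_tau_delta (E F : Expr) :
    Prov (.sum (.pre Act.tau E) (.pre Act.delta F)) (.pre Act.tau E) := by
  refine Prov.trans (Prov.pri6 E (.pre Act.delta F)) ?_
  refine Prov.trans (Prov.congSum (Prov.refl _) (Prov.pri3 F)) ?_
  exact Prov.a4 _

/-- Delete a δ-summand next to something with a τ-summand. -/
lemma prov_del_delta {P : Expr} (h : HasTau P) (F : Expr) :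
    Prov (.sum P (.pre Act.delta F)) P := by
  induction h with
  | pre E => exact prov_tau_delta E F
  | sumL Q hP ih =>
      -- (P + Q) + δF ≃ P + (Q + δF) ≃ P + (δF + Q) ≃ (P + δF) + Q ≃ P + Q
      refine Prov.trans (Prov.a2 _ _ _) ?_
      refine Prov.trans (Prov.congSum (Prov.refl _) (Prov.a1 _ _)) ?_
      refine Prov.trans (Prov.symm (Prov.a2 _ _ _)) ?_
      exact Prov.congSum ih (Prov.refl _)
  | sumR P hQ ih =>
      refine Prov.trans (Prov.a2 _ _ _) ?_
      exact Prov.congSum (Prov.refl _) ih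


lemma hasTau_foldr {n : ℕ} (Es : Fin n → Expr) {L : List (Act × Fin n)} {j : Fin n}
    (h : (Act.tau, j) ∈ L) (T : Expr) :
    HasTau (L.foldr (fun p acc => Expr.sum (Expr.pre p.1 (Es p.2)) acc) T) := by
  induction L with
  | nil => cases h
  | cons a L ih =>
      rcases List.mem_cons.1 h with h | h
      · subst h; exact HasTau.sumL _ (HasTau.pre _)
      · exact HasTau.sumR _ (ih h)

/-- With a τ.E guard on the left, all δ-summands of the rest may be deleted. -/
lemma prov_guard_filter {n : ℕ} (Es : Fin n → Expr) (E T : Expr) :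
    ∀ L : List (Act × Fin n),
      Prov (.sum (.pre Act.tau E)
              (L.foldr (fun p acc => Expr.sum (Expr.pre p.1 (Es p.2)) acc) T))
           (.sum (.pre Act.tau E)
              ((L.filter (fun p => decide (p.1 ≠ Act.delta))).foldr
                (fun p acc => Expr.sum (Expr.pre p.1 (Es p.2)) acc) T))
  | [] => Prov.refl _
  | (γ, j) :: L => by
      by_cases hγ : γ = Act.delta
      · subst hγ
        rw [List.filter_cons_of_neg (by simp)]
        -- τE + (δF + rest) ≃ (τE + δF) + rest ≃ τE + rest ≃ ...
        refine Prov.trans (Prov.symm (Prov.a2 _ _ _)) ?_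
        refine Prov.trans (Prov.congSum (prov_tau_delta E _) (Prov.refl _)) ?_
        exact prov_guard_filter Es E T L
      · rw [List.filter_cons_of_pos (by simpa using hγ)]
        -- τE + (γF + rest) ≃ (τE + γF) + rest ≃ (γF + τE) + rest
        --   ≃ γF + (τE + rest) ≃ γF + (τE + rest') ≃ back
        refine Prov.trans (Prov.symm (Prov.a2 _ _ _)) ?_
        refine Prov.trans (Prov.congSum (Prov.a1 _ _) (Prov.refl _)) ?_
        refine Prov.trans (Prov.a2 _ _ _) ?_
        refine Prov.trans (Prov.congSum (Prov.refl _) (prov_guard_filter Es E T L)) ?_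
        refine Prov.trans (Prov.symm (Prov.a2 _ _ _)) ?_
        refine Prov.trans (Prov.congSum (Prov.a1 _ _) (Prov.refl _)) ?_
        exact Prov.a2 _ _ _

lemma prov_filter {n : ℕ} (Es : Fin n → Expr) (T : Expr) :
    ∀ L : List (Act × Fin n), (∃ j, (Act.tau, j) ∈ L) →
      Prov (L.foldr (fun p acc => Expr.sum (Expr.pre p.1 (Es p.2)) acc) T)
           ((L.filter (fun p => decide (p.1 ≠ Act.delta))).foldr
             (fun p acc => Expr.sum (Expr.pre p.1 (Es p.2)) acc) T)
  | [], h => by rcases h with ⟨j, hj⟩; cases hj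
  | (γ, j) :: L, h => by
      by_cases hτ : γ = Act.tau
      · subst hτ
        rw [List.filter_cons_of_pos (by simp)]
        exact prov_guard_filter Es (Es j) T L
      · by_cases hδ : γ = Act.delta
        · subst hδ
          rw [List.filter_cons_of_neg (by simp)]
          rcases h with ⟨k, hk⟩
          have hk' : (Act.tau, k) ∈ L := by
            rcases List.mem_cons.1 hk with h | h
            · cases h
            · exact h
          refine Prov.trans (Prov.a1 _ _) ?_
          refine Prov.trans (prov_del_delta (hasTau_foldr Es hk' T) _) ?_
          exact prov_filter Es T L ⟨k, hk'⟩
        · simp only [List.filter_cons]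
          rw [if_pos (by simpa using hδ)]
          rcases h with ⟨k, hk⟩
          have hk' : (Act.tau, k) ∈ L := by
            rcases List.mem_cons.1 hk with h | h
            · exact absurd (congrArg Prod.fst h).symm hτ
            · exact h
          exact Prov.congSum (Prov.refl _) (prov_filter Es T L ⟨k, hk'⟩)

/-- every standard equation set can be reduced to a prioritized one
with the same provable solutions, preserving guardedness. -/
theorem prioritize_eqset {n : ℕ} (hn : 0 < n) (S : StdEqSet n) (E : Expr)
    (hsat : ProvSat hn E S) :
    Prioritized (prioritize S) ∧ ProvSat hn E (prioritize S) ∧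
      (EqGuarded S → EqGuarded (prioritize S)) := by
  have hmem : ∀ i p, p ∈ (prioritize S).pres i → p ∈ S.pres i := by
    intro i p hp
    simp only [prioritize] at hp
    split at hp
    · exact List.mem_of_mem_filter hp
    · exact hp
  refine ⟨?_, ?_, ?_⟩
  · -- Prioritized
    intro i ⟨j, hj⟩ k hk
    simp only [prioritize] at hj hk
    by_cases hA : (S.pres i).any (fun p => decide (p.1 = Act.tau))
    · rw [if_pos hA] at hk
      have := List.of_mem_filter hk
      simp at this
    · rw [if_neg hA] at hj
      exact hA (List.any_eq_true.2 ⟨(Act.tau, j), hj, by simp⟩)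
  · -- ProvSat
    rcases hsat with ⟨Es, hE0, hfree, hprov⟩
    refine ⟨Es, hE0, hfree, fun i => ?_⟩
    refine Prov.trans (hprov i) ?_
    unfold instBody
    simp only [prioritize]
    by_cases hA : (S.pres i).any (fun p => decide (p.1 = Act.tau))
    · rw [if_pos hA]
      rcases List.any_eq_true.1 hA with ⟨p, hp, hpt⟩
      have hpt' : p.1 = Act.tau := by simpa using hpt
      exact prov_filter Es _ (S.pres i) ⟨p.2, by rw [← hpt']; exact hp⟩
    · rw [if_neg hA]; exact Prov.refl _
  · -- Guardedness
    intro hG i hcyc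
    exact hG i (Relation.TransGen.mono (fun a b hab => hmem a (Act.tau, b) hab) i i hcyc)

end PrioCalc
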